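/- A sorting network (reduced word of the reverse permutation n(n-1)···21 in S_n) is 132-avoiding if and only if it is 312-avoiding, where a sorting network w_1...w_N is p-avoiding if every intermediate permutation s_{w_1}···s_{w_k} (1 ≤ k ≤ N) avoids the pattern p. -/

import Mathlib

/-- The adjacent transposition `s_a` (1-indexed letter `a`) acting on positions `Fin n`. -/
def adjT (n a : ℕ) : Equiv.Perm (Fin n) :=
  if h : 1 ≤ a ∧ a < n then Equiv.swap ⟨a - 1, by omega⟩ ⟨a, h.2⟩ else 1

/-- The permutation `s_{w_1} ∘ s_{w_2} ∘ ⋯ ∘ s_{w_m}` of a word, transpositions acting on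
positions composed from the left (`s_{w_1}` applied first to the identity). -/
def permOfWord (n : ℕ) (w : List ℕ) : Equiv.Perm (Fin n) :=
  (w.map (adjT n)).prod

/-- The set of inversions of a permutation. -/
def invSet {n : ℕ} (σ : Equiv.Perm (Fin n)) : Set (Fin n × Fin n) :=
  {p | p.1 < p.2 ∧ σ p.2 < σ p.1}

/-- The number of inversions. -/
noncomputable def invNum {n : ℕ} (σ : Equiv.Perm (Fin n)) : ℕ := (invSet σ).ncard

/-- `w` is a reduced word for `σ`: letters in `[n-1]`, the product of the corresponding
adjacent transpositions is `σ`, and the length is `inv σ`. -/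
def IsReducedWord (n : ℕ) (σ : Equiv.Perm (Fin n)) (w : List ℕ) : Prop :=
  (∀ a ∈ w, 1 ≤ a ∧ a < n) ∧ permOfWord n w = σ ∧ w.length = invNum σ

/-- `σ` avoids the pattern 132. -/
def Avoids132 {n : ℕ} (σ : Equiv.Perm (Fin n)) : Prop :=
  ¬ ∃ i1 i2 i3 : Fin n, i1 < i2 ∧ i2 < i3 ∧ σ i1 < σ i3 ∧ σ i3 < σ i2

/-- `σ` avoids the pattern 312. -/
def Avoids312 {n : ℕ} (σ : Equiv.Perm (Fin n)) : Prop :=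
  ¬ ∃ i1 i2 i3 : Fin n, i1 < i2 ∧ i2 < i3 ∧ σ i2 < σ i3 ∧ σ i3 < σ i1

/-- The Rothe diagram of `σ` (permutation matrix with 1s at `(σ i, i)`, 0-indexed):
cells strictly north of the 1 in their column and strictly west of the 1 in their row. -/
def rothe {n : ℕ} (σ : Equiv.Perm (Fin n)) : Set (Fin n × Fin n) :=
  {p | p.1 < σ p.2 ∧ p.2 < σ.symm p.1}

/-- Two cells are adjacent if they share an edge. -/
def adjCell {n : ℕ} (p q : Fin n × Fin n) : Prop :=
  (p.1 = q.1 ∧ ((p.2 : ℕ) + 1 = q.2 ∨ (q.2 : ℕ) + 1 = p.2)) ∨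
  (p.2 = q.2 ∧ ((p.1 : ℕ) + 1 = q.1 ∨ (q.1 : ℕ) + 1 = p.1))

/-- The connected component of the Rothe diagram containing the (0-indexed) cell `(0,0)`,
empty if `(0,0)` is not in the diagram. -/
def comp11 {n : ℕ} (σ : Equiv.Perm (Fin n)) : Set (Fin n × Fin n) :=
  {p | ∃ h0 : 0 < n,
    Relation.ReflTransGen (fun a b => a ∈ rothe σ ∧ b ∈ rothe σ ∧ adjCell a b)
      (⟨⟨0, h0⟩, ⟨0, h0⟩⟩) p ∧
    p ∈ rothe σ ∧ ((⟨⟨0, h0⟩, ⟨0, h0⟩⟩ : Fin n × Fin n)) ∈ rothe σ}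

/-- Edelman–Greene insertion of `x` into a single (strictly increasing) row:
returns the new row and the optional entry bumped into the next row. -/
def insRow (x : ℕ) : List ℕ → List ℕ × Option ℕ
  | [] => ([x], none)
  | z :: zs =>
    if z < x then
      let r := insRow x zs
      (z :: r.1, r.2)
    else if z = x then (z :: zs, some (z + 1))
    else (x :: zs, some z)

/-- Edelman–Greene insertion of `x` into a tableau (list of rows). -/
def insTab (x : ℕ) : List (List ℕ) → List (List ℕ)
  | [] => [[x]]
  | r :: rs =>
    let p := insRow x r
    match p.2 with
    | none => p.1 :: rs
    | some y => p.1 :: insTab y rs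

/-- The Edelman–Greene insertion tableau `P(w)`. -/
def Ptab (w : List ℕ) : List (List ℕ) := w.foldl (fun t x => insTab x t) []

/-- Add the label `k` to the recording tableau `q` at the unique new cell of shape `p`. -/
def recordCell (k : ℕ) : List (List ℕ) → List (List ℕ) → List (List ℕ)
  | _, [] => []
  | [], _ :: _ => [[k]]
  | q :: qs, p :: ps =>
    if q.length < p.length then (q ++ [k]) :: qs else q :: recordCell k qs ps

/-- The Edelman–Greene recording tableau `Q(w) = EG(w)`. -/
def Qtab (w : List ℕ) : List (List ℕ) :=
  (w.foldl (fun pq x =>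
      let P' := insTab x pq.1
      (P', recordCell (pq.2.flatten.length + 1) pq.2 P'))
    (([], []) : List (List ℕ) × List (List ℕ))).2

/-- A tableau is frozen if the cell in (0-indexed) row `i`, column `j` contains `i + j + 1`. -/
def Frozen (P : List (List ℕ)) : Prop :=
  ∀ i j, i < P.length → j < (P.getD i []).length → (P.getD i []).getD j 0 = i + j + 1

/-- All rows strictly increasing. -/
def RowStrict (P : List (List ℕ)) : Prop := ∀ r ∈ P, List.Pairwise (· < ·) r

/-- All columns strictly increasing. -/
def ColStrict (P : List (List ℕ)) : Prop :=
  ∀ i j, i + 1 < P.length → j < (P.getD (i + 1) []).length →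
    (P.getD i []).getD j 0 < (P.getD (i + 1) []).getD j 0

/-- Valid Young-diagram shape: nonempty rows of weakly decreasing lengths. -/
def TabShape (P : List (List ℕ)) : Prop :=
  (∀ r ∈ P, r ≠ []) ∧ ∀ i, i + 1 < P.length → (P.getD (i + 1) []).length ≤ (P.getD i []).length

/-- The reading word: rows left to right, from the bottom row up. -/
def readingWord (P : List (List ℕ)) : List ℕ := P.reverse.flatten

/-- A standard Young tableau: valid shape, strictly increasing rows and columns, and the
entries are `1, …, N` each exactly once. -/
def IsStandard (Q : List (List ℕ)) : Prop :=
  TabShape Q ∧ RowStrict Q ∧ ColStrict Q ∧ Q.flatten.Perm (List.range' 1 Q.flatten.length)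

/-- `Q` has the staircase shape `sc_n = (n-1, n-2, …, 1)`. -/
def StaircaseShape (n : ℕ) (Q : List (List ℕ)) : Prop :=
  Q.length = n - 1 ∧ ∀ i, i < n - 1 → (Q.getD i []).length = n - 1 - i

/-- A sorting network: a reduced word of the reverse permutation in `S_n`. -/
def IsSortingNetwork (n : ℕ) (w : List ℕ) : Prop :=
  IsReducedWord n Fin.revPerm w

/-- Every intermediate permutation of the word avoids 132. -/
def Avoiding132 (n : ℕ) (w : List ℕ) : Prop :=
  ∀ k, k ≤ w.length → Avoids132 (permOfWord n (w.take k))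

/-- Every intermediate permutation of the word avoids 312. -/
def Avoiding312 (n : ℕ) (w : List ℕ) : Prop :=
  ∀ k, k ≤ w.length → Avoids312 (permOfWord n (w.take k))

/-- `c` is the column word of `Q`: its `k`-th letter (1-indexed) is the (1-indexed) column
of the entry `k` in `Q`. -/
def IsColumnWord (Q : List (List ℕ)) (c : List ℕ) : Prop :=
  c.length = Q.flatten.length ∧
  ∀ k, k < c.length → ∃ i j, i < Q.length ∧ j < (Q.getD i []).length ∧
    (Q.getD i []).getD j 0 = k + 1 ∧ c.getD k 0 = j + 1

/-- All anti-diagonals of `Q` increase downwards: `Q_{i,j} > Q_{i-1,j+1}` (1-indexed). -/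
def AntiDiagDown (Q : List (List ℕ)) : Prop :=
  ∀ i j, i + 1 < Q.length → j < (Q.getD (i + 1) []).length → j + 1 < (Q.getD i []).length →
    (Q.getD i []).getD (j + 1) 0 < (Q.getD (i + 1) []).getD j 0


section SNAux

open Equiv

/-! ### Basic lemmas about `adjT` and `permOfWord` -/

lemma adjT_inv (n a : ℕ) : (adjT n a)⁻¹ = adjT n a := by
  unfold adjT; split <;> simp

lemma permOfWord_nil (n : ℕ) : permOfWord n [] = 1 := rfl

lemma permOfWord_append (n : ℕ) (u v : List ℕ) :
    permOfWord n (u ++ v) = permOfWord n u * permOfWord n v := by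
  simp [permOfWord]

lemma permOfWord_take_succ (n : ℕ) (w : List ℕ) (k : ℕ) (hk : k < w.length) :
    permOfWord n (w.take (k+1)) = permOfWord n (w.take k) * adjT n w[k] := by
  rw [List.take_succ, List.getElem?_eq_getElem hk]
  unfold permOfWord
  rw [List.map_append, List.prod_append]
  simp

/-! ### Inversion number lemmas -/

lemma invNum_one (n : ℕ) : invNum (1 : Equiv.Perm (Fin n)) = 0 := by
  have h : invSet (1 : Equiv.Perm (Fin n)) = ∅ := by
    ext p
    simp only [invSet, Set.mem_setOf_eq, Set.mem_empty_iff_false, iff_false, not_and]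
    intro h1
    simp only [Equiv.Perm.one_apply]
    exact not_lt.2 h1.le
  simp [invNum, h]

lemma swap_map_lt {n : ℕ} {b c x y : Fin n} (hbc : (b:ℕ)+1 = c) (hxy : x < y)
    (hne : ¬ (x = b ∧ y = c)) : Equiv.swap b c x < Equiv.swap b c y := by
  have vne : ∀ {u v : Fin n}, u ≠ v → (u:ℕ) ≠ (v:ℕ) := fun h hv => h (Fin.val_injective hv)
  have vxy : (x:ℕ) < y := hxy
  have hsb : Equiv.swap b c b = c := Equiv.swap_apply_left b c
  have hsc : Equiv.swap b c c = b := Equiv.swap_apply_right b c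
  have hsz : ∀ z : Fin n, z ≠ b → z ≠ c → Equiv.swap b c z = z :=
    fun z h h' => Equiv.swap_apply_of_ne_of_ne h h'
  by_cases hxb : x = b
  · have vxb : (x:ℕ) = b := congrArg Fin.val hxb
    have hyc : y ≠ c := fun h => hne ⟨hxb, h⟩
    have vyc : (y:ℕ) ≠ c := vne hyc
    have hyb : y ≠ b := by simp only [ne_eq, Fin.ext_iff]; omega
    rw [hxb, hsb, hsz y hyb hyc]
    exact Fin.lt_def.mpr (by omega)
  · have vxb : (x:ℕ) ≠ b := vne hxb
    by_cases hxc : x = c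
    · have vxc : (x:ℕ) = c := congrArg Fin.val hxc
      have hyb : y ≠ b := by simp only [ne_eq, Fin.ext_iff]; omega
      have hyc : y ≠ c := by simp only [ne_eq, Fin.ext_iff]; omega
      rw [hxc, hsc, hsz y hyb hyc]
      exact Fin.lt_def.mpr (by omega)
    · have vxc : (x:ℕ) ≠ c := vne hxc
      rw [hsz x hxb hxc]
      by_cases hyb : y = b
      · rw [hyb, hsb]
        have vyb : (y:ℕ) = b := congrArg Fin.val hyb
        exact Fin.lt_def.mpr (by omega)
      · by_cases hyc : y = c
        · rw [hyc, hsc]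
          have vyc : (y:ℕ) = c := congrArg Fin.val hyc
          exact Fin.lt_def.mpr (by omega)
        · rw [hsz y hyb hyc]
          exact hxy

lemma invNum_mul_swap_ascent {n : ℕ} {σ : Equiv.Perm (Fin n)} {b c : Fin n}
    (hbc : (b:ℕ)+1 = c) (hasc : σ b < σ c) :
    invNum (σ * Equiv.swap b c) = invNum σ + 1 := by
  classical
  set s := Equiv.swap b c with hs
  have hss : ∀ x, s (s x) = x := fun x => Equiv.swap_apply_self b c x
  have hsb : s b = c := Equiv.swap_apply_left b c
  have hsc : s c = b := Equiv.swap_apply_right b c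
  have hbltc : b < c := by rw [Fin.lt_def]; omega
  have key : invSet (σ * s) =
      insert (b, c) ((fun p : Fin n × Fin n => (s p.1, s p.2)) '' invSet σ) := by
    ext ⟨i, j⟩
    simp only [invSet, Set.mem_setOf_eq, Set.mem_insert_iff, Set.mem_image,
      Prod.mk.injEq, Equiv.Perm.mul_apply]
    constructor
    · rintro ⟨h1, h2⟩
      by_cases hp : i = b ∧ j = c
      · exact Or.inl ⟨hp.1, hp.2⟩
      · refine Or.inr ⟨(s i, s j), ⟨swap_map_lt hbc h1 hp, ?_⟩, hss i, hss j⟩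
        simpa [hss] using h2
    · rintro (⟨rfl, rfl⟩ | ⟨⟨x, y⟩, ⟨hxy, hinv⟩, hx, hy⟩)
      · refine ⟨hbltc, ?_⟩
        rw [hsb, hsc]
        exact hasc
      · subst hx; subst hy
        have hne : ¬ (x = b ∧ y = c) := by
          rintro ⟨rfl, rfl⟩
          exact absurd hinv (not_lt.2 hasc.le)
        refine ⟨swap_map_lt hbc hxy hne, ?_⟩
        simpa [hss] using hinv
  have hnotmem : (b, c) ∉ (fun p : Fin n × Fin n => (s p.1, s p.2)) '' invSet σ := by
    rintro ⟨⟨x, y⟩, ⟨hxy, hinv⟩, hx⟩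
    have h1 : s x = b := congrArg Prod.fst hx
    have h2 : s y = c := congrArg Prod.snd hx
    have hx' : x = c := by rw [← hss x, h1, hsb]
    have hy' : y = b := by rw [← hss y, h2, hsc]
    subst hx'; subst hy'
    exact absurd hxy (not_lt.2 hbltc.le)
  have hinj : Function.Injective (fun p : Fin n × Fin n => (s p.1, s p.2)) := by
    intro p q h
    have h1 : s p.1 = s q.1 := congrArg Prod.fst h
    have h2 : s p.2 = s q.2 := congrArg Prod.snd h
    exact Prod.ext (s.injective h1) (s.injective h2)
  rw [invNum, invNum, key, Set.ncard_insert_of_notMem hnotmem (Set.toFinite _),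
    Set.ncard_image_of_injective _ hinj]

lemma invNum_mul_swap {n : ℕ} {σ : Equiv.Perm (Fin n)} {b c : Fin n}
    (hbc : (b:ℕ)+1 = c) :
    (σ b < σ c ∧ invNum (σ * Equiv.swap b c) = invNum σ + 1) ∨
    (σ c < σ b ∧ invNum σ = invNum (σ * Equiv.swap b c) + 1) := by
  have hbne : b ≠ c := by
    intro h; rw [h] at hbc; omega
  rcases lt_trichotomy (σ b) (σ c) with h | h | h
  · exact Or.inl ⟨h, invNum_mul_swap_ascent hbc h⟩
  · exact absurd (σ.injective h) hbne
  · refine Or.inr ⟨h, ?_⟩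
    have hasc' : (σ * Equiv.swap b c) b < (σ * Equiv.swap b c) c := by
      simp only [Equiv.Perm.mul_apply, Equiv.swap_apply_left, Equiv.swap_apply_right]
      exact h
    have := invNum_mul_swap_ascent (σ := σ * Equiv.swap b c) hbc hasc'
    rw [mul_assoc, Equiv.swap_mul_self, mul_one] at this
    exact this

/-! ### Reduced word prefix lemmas -/

lemma letter_data {n : ℕ} {w : List ℕ} (hw : IsReducedWord n Fin.revPerm w)
    (k : ℕ) (hk : k < w.length) :
    ∃ b c : Fin n, (b:ℕ)+1 = (c:ℕ) ∧ adjT n w[k] = Equiv.swap b c := by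
  obtain ⟨h1, h2⟩ := hw.1 w[k] (List.getElem_mem hk)
  refine ⟨⟨w[k]-1, by omega⟩, ⟨w[k], h2⟩, by simp; omega, ?_⟩
  unfold adjT
  rw [dif_pos ⟨h1, h2⟩]

lemma invNum_take_le {n : ℕ} {w : List ℕ} (hw : IsReducedWord n Fin.revPerm w) :
    ∀ k, invNum (permOfWord n (w.take k)) ≤ k := by
  intro k
  induction k with
  | zero => simp [permOfWord_nil, invNum_one]
  | succ k ih =>
    by_cases hk : k < w.length
    · obtain ⟨b, c, hbc, heq⟩ := letter_data hw k hk
      rw [permOfWord_take_succ n w k hk, heq]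
      rcases invNum_mul_swap (σ := permOfWord n (w.take k)) hbc with ⟨_, h⟩ | ⟨_, h⟩ <;> omega
    · have he : w.take (k+1) = w.take k := by
        rw [List.take_of_length_le (by omega), List.take_of_length_le (by omega)]
      rw [he]
      exact ih.trans (Nat.le_succ k)

lemma invNum_take_eq {n : ℕ} {w : List ℕ} (hw : IsReducedWord n Fin.revPerm w) :
    ∀ k, k ≤ w.length → invNum (permOfWord n (w.take k)) = k := by
  have base : invNum (permOfWord n (w.take w.length)) = w.length := by
    rw [List.take_length, hw.2.1, ← hw.2.2]
  have main : ∀ d, invNum (permOfWord n (w.take (w.length - d))) = w.length - d := by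
    intro d
    induction d with
    | zero => simpa using base
    | succ d ih =>
      by_cases hd : d < w.length
      · have hk : w.length - (d+1) < w.length := by omega
        have hk1 : w.length - (d+1) + 1 = w.length - d := by omega
        obtain ⟨b, c, hbc, heq⟩ := letter_data hw (w.length - (d+1)) hk
        have hstep := permOfWord_take_succ n w (w.length - (d+1)) hk
        rw [heq, hk1] at hstep
        have hle := invNum_take_le hw (w.length - (d+1))
        rcases invNum_mul_swap (σ := permOfWord n (w.take (w.length - (d+1)))) hbc with
          ⟨_, h⟩ | ⟨_, h⟩ <;> rw [← hstep, ih] at h <;> omega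
      · have : w.length - (d+1) = w.length - d := by omega
        rw [this]; exact ih
  intro k hk
  have := main (w.length - k)
  rwa [Nat.sub_sub_self hk] at this

lemma step_all {n : ℕ} {w : List ℕ} (hw : IsReducedWord n Fin.revPerm w)
    (k : ℕ) (hk : k < w.length) :
    ∃ b c : Fin n, (b:ℕ)+1 = (c:ℕ) ∧
      permOfWord n (w.take (k+1)) = permOfWord n (w.take k) * Equiv.swap b c ∧
      permOfWord n (w.take k) b < permOfWord n (w.take k) c := by
  obtain ⟨b, c, hbc, heq⟩ := letter_data hw k hk
  have hstep := permOfWord_take_succ n w k hk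
  rw [heq] at hstep
  refine ⟨b, c, hbc, hstep, ?_⟩
  have e1 := invNum_take_eq hw k (le_of_lt hk)
  have e2 := invNum_take_eq hw (k+1) hk
  rw [hstep] at e2
  rcases invNum_mul_swap (σ := permOfWord n (w.take k)) hbc with ⟨h, _⟩ | ⟨_, h⟩
  · exact h
  · omega

/-! ### Pattern avoidance lemmas -/

lemma avoids132_one (n : ℕ) : Avoids132 (1 : Equiv.Perm (Fin n)) := by
  rintro ⟨i1, i2, i3, h12, h23, hA, hB⟩
  simp only [Equiv.Perm.one_apply] at hA hB
  exact absurd hB (not_lt.2 h23.le)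

lemma avoids312_one (n : ℕ) : Avoids312 (1 : Equiv.Perm (Fin n)) := by
  rintro ⟨i1, i2, i3, h12, h23, hA, hB⟩
  simp only [Equiv.Perm.one_apply] at hA hB
  exact absurd hB (not_lt.2 ((h12.trans h23).le))

/-- The key combinatorial lemma: if `σ` avoids both 132 and 312, we swap an ascent at
adjacent positions `b, c`, and the result avoids 132, then it also avoids 312. -/
lemma core_step {n : ℕ} {σ : Equiv.Perm (Fin n)} {b c : Fin n} (hbc : (b:ℕ)+1 = c)
    (h1 : Avoids132 σ) (h3 : Avoids312 σ) (hasc : σ b < σ c)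
    (h1' : Avoids132 (σ * Equiv.swap b c)) : Avoids312 (σ * Equiv.swap b c) := by
  rintro ⟨i, j, k, hij, hjk, hA, hB⟩
  simp only [Equiv.Perm.mul_apply] at hA hB
  have vne : ∀ {u v : Fin n}, u ≠ v → (u:ℕ) ≠ (v:ℕ) := fun h hv => h (Fin.val_injective hv)
  have flt : ∀ {u v : Fin n}, (u:ℕ) < (v:ℕ) → u < v := fun h => Fin.lt_def.mpr h
  have hsb : Equiv.swap b c b = c := Equiv.swap_apply_left b c
  have hsc : Equiv.swap b c c = b := Equiv.swap_apply_right b c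
  have hsz : ∀ z : Fin n, z ≠ b → z ≠ c → Equiv.swap b c z = z :=
    fun z h h' => Equiv.swap_apply_of_ne_of_ne h h'
  have vij : (i:ℕ) < j := hij
  have vjk : (j:ℕ) < k := hjk
  by_cases hib : i = b
  · have vib : (i:ℕ) = b := congrArg Fin.val hib
    by_cases hjc : j = c
    · -- case A : (i,j) = (b,c); gives a 132 pattern in σ
      have vjc : (j:ℕ) = c := congrArg Fin.val hjc
      have hkb : k ≠ b := by simp only [ne_eq, Fin.ext_iff]; omega
      have hkc : k ≠ c := by simp only [ne_eq, Fin.ext_iff]; omega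
      rw [hjc, hsc, hsz k hkb hkc] at hA
      rw [hsz k hkb hkc, hib, hsb] at hB
      exact h1 ⟨b, c, k, flt (by omega), flt (by omega), hA, hB⟩
    · -- case B : i = b, j > c
      have vjc : (j:ℕ) ≠ c := vne hjc
      have hjb : j ≠ b := by simp only [ne_eq, Fin.ext_iff]; omega
      have hkb : k ≠ b := by simp only [ne_eq, Fin.ext_iff]; omega
      have hkc : k ≠ c := by simp only [ne_eq, Fin.ext_iff]; omega
      rw [hsz j hjb hjc, hsz k hkb hkc] at hA
      rw [hsz k hkb hkc, hib, hsb] at hB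
      exact h3 ⟨c, j, k, flt (by omega), flt (by omega), hA, hB⟩
  · have vib : (i:ℕ) ≠ b := vne hib
    by_cases hic : i = c
    · -- case C : i = c, j, k > c
      have vic : (i:ℕ) = c := congrArg Fin.val hic
      have hjb : j ≠ b := by simp only [ne_eq, Fin.ext_iff]; omega
      have hjc : j ≠ c := by simp only [ne_eq, Fin.ext_iff]; omega
      have hkb : k ≠ b := by simp only [ne_eq, Fin.ext_iff]; omega
      have hkc : k ≠ c := by simp only [ne_eq, Fin.ext_iff]; omega
      rw [hsz j hjb hjc, hsz k hkb hkc] at hA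
      rw [hsz k hkb hkc, hic, hsc] at hB
      exact h3 ⟨b, j, k, flt (by omega), flt (by omega), hA, hB⟩
    · have vic : (i:ℕ) ≠ c := vne hic
      rw [hsz i hib hic] at hB
      by_cases hjb : j = b
      · have vjb : (j:ℕ) = b := congrArg Fin.val hjb
        by_cases hkc : k = c
        · -- (j,k) = (b,c): contradicts the ascent
          rw [hjb, hsb, hkc, hsc] at hA
          exact absurd hasc (not_lt.2 hA.le)
        · -- case D : j = b, i < b, k > c
          have vkc : (k:ℕ) ≠ c := vne hkc
          have hkb : k ≠ b := by simp only [ne_eq, Fin.ext_iff]; omega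
          rw [hjb, hsb, hsz k hkb hkc] at hA
          rw [hsz k hkb hkc] at hB
          exact h3 ⟨i, c, k, flt (by omega), flt (by omega), hA, hB⟩
      · have vjb : (j:ℕ) ≠ b := vne hjb
        by_cases hjc : j = c
        · -- case E : j = c, i < b, k > c
          have vjc : (j:ℕ) = c := congrArg Fin.val hjc
          have hkb : k ≠ b := by simp only [ne_eq, Fin.ext_iff]; omega
          have hkc : k ≠ c := by simp only [ne_eq, Fin.ext_iff]; omega
          rw [hjc, hsc, hsz k hkb hkc] at hA
          rw [hsz k hkb hkc] at hB
          exact h3 ⟨i, b, k, flt (by omega), flt (by omega), hA, hB⟩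
        · have vjc : (j:ℕ) ≠ c := vne hjc
          by_cases hkb : k = b
          · -- case F : k = b, i < j < b
            have vkb : (k:ℕ) = b := congrArg Fin.val hkb
            rw [hsz j hjb hjc, hkb, hsb] at hA
            rw [hkb, hsb] at hB
            exact h3 ⟨i, j, c, hij, flt (by omega), hA, hB⟩
          · have vkb : (k:ℕ) ≠ b := vne hkb
            by_cases hkc : k = c
            · -- case G : k = c, i < j < b
              have vkc : (k:ℕ) = c := congrArg Fin.val hkc
              rw [hsz j hjb hjc, hkc, hsc] at hA
              rw [hkc, hsc] at hB
              exact h3 ⟨i, j, b, hij, flt (by omega), hA, hB⟩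
            · -- case H : pattern untouched
              rw [hsz j hjb hjc, hsz k hkb hkc] at hA
              rw [hsz k hkb hkc] at hB
              exact h3 ⟨i, j, k, hij, hjk, hA, hB⟩

lemma both_avoid {n : ℕ} {w : List ℕ} (hw : IsReducedWord n Fin.revPerm w)
    (h : Avoiding132 n w) :
    ∀ k, k ≤ w.length →
      Avoids132 (permOfWord n (w.take k)) ∧ Avoids312 (permOfWord n (w.take k)) := by
  intro k
  induction k with
  | zero =>
    intro _
    rw [List.take_zero, permOfWord_nil]
    exact ⟨avoids132_one n, avoids312_one n⟩
  | succ k ih =>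
    intro hk1
    have hk : k < w.length := hk1
    obtain ⟨b, c, hbc, heq, hasc⟩ := step_all hw k hk
    obtain ⟨ih1, ih3⟩ := ih (le_of_lt hk)
    have h1' : Avoids132 (permOfWord n (w.take (k+1))) := h (k+1) hk1
    refine ⟨h1', ?_⟩
    rw [heq] at h1' ⊢
    exact core_step hbc ih1 ih3 hasc h1'

lemma avoiding132_to_312 {n : ℕ} {w : List ℕ} (hw : IsReducedWord n Fin.revPerm w)
    (h : Avoiding132 n w) : Avoiding312 n w :=
  fun k hk => (both_avoid hw h k hk).2

/-! ### Reversal and complement symmetry -/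

lemma avoids_comp {n : ℕ} (σ : Equiv.Perm (Fin n)) :
    Avoids132 σ ↔ Avoids312 (Fin.revPerm * σ) := by
  apply not_congr
  constructor
  · rintro ⟨a, b, c, h1, h2, h3, h4⟩
    refine ⟨a, b, c, h1, h2, ?_, ?_⟩ <;>
      simp only [Equiv.Perm.mul_apply, Fin.revPerm_apply, Fin.rev_lt_rev] <;>
      assumption
  · rintro ⟨a, b, c, h1, h2, h3, h4⟩
    simp only [Equiv.Perm.mul_apply, Fin.revPerm_apply, Fin.rev_lt_rev] at h3 h4
    exact ⟨a, b, c, h1, h2, h4, h3⟩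

lemma permOfWord_reverse_take {n : ℕ} {w : List ℕ} (hw : permOfWord n w = Fin.revPerm)
    (k : ℕ) (hk : k ≤ w.length) :
    permOfWord n (w.reverse.take k) =
      Fin.revPerm * permOfWord n (w.take (w.length - k)) := by
  set t := w.length - k with ht
  have hsplit : w.take t ++ w.drop t = w := List.take_append_drop t w
  have hlen : ((w.drop t).reverse).length = k := by
    rw [List.length_reverse, List.length_drop]; omega
  have h1 : w.reverse.take k = (w.drop t).reverse := by
    conv_lhs => rw [← hsplit]
    rw [List.reverse_append, ← hlen, List.take_left]
  have h2 : permOfWord n ((w.drop t).reverse) = (permOfWord n (w.drop t))⁻¹ := by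
    unfold permOfWord
    have hc : ((fun x : Equiv.Perm (Fin n) => x⁻¹) ∘ adjT n) = adjT n := by
      funext a
      simp only [Function.comp_apply]
      exact adjT_inv n a
    rw [List.map_reverse, List.prod_reverse_noncomm, List.map_map, hc]
  have h4 : permOfWord n (w.take t) * permOfWord n (w.drop t) = Fin.revPerm := by
    rw [← permOfWord_append, hsplit, hw]
  have h5 : permOfWord n (w.drop t) = (permOfWord n (w.take t))⁻¹ * Fin.revPerm := by
    rw [← h4]; group
  rw [h1, h2, h5, mul_inv_rev, inv_inv]
  congr 1

lemma avoiding132_iff_rev {n : ℕ} {w : List ℕ} (hw : IsReducedWord n Fin.revPerm w) :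
    Avoiding132 n w ↔ Avoiding312 n w.reverse := by
  constructor
  · intro h k hk
    rw [List.length_reverse] at hk
    rw [permOfWord_reverse_take hw.2.1 k hk]
    exact (avoids_comp _).mp (h (w.length - k) (by omega))
  · intro h k hk
    have h2 : w.length - (w.length - k) = k := by omega
    have hh := h (w.length - k) (by rw [List.length_reverse]; omega)
    rw [permOfWord_reverse_take hw.2.1 (w.length - k) (by omega), h2] at hh
    exact (avoids_comp _).mpr hh

lemma reverse_reduced {n : ℕ} {w : List ℕ} (hw : IsReducedWord n Fin.revPerm w) :
    IsReducedWord n Fin.revPerm w.reverse := by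
  refine ⟨fun a ha => hw.1 a (List.mem_reverse.mp ha), ?_,
    by rw [List.length_reverse]; exact hw.2.2⟩
  have h := permOfWord_reverse_take hw.2.1 w.length le_rfl
  rw [Nat.sub_self] at h
  have h0 : w.reverse.take w.length = w.reverse :=
    List.take_of_length_le (by rw [List.length_reverse])
  rw [h0] at h
  simpa [permOfWord_nil] using h

end SNAux

/-- a sorting network is 132-avoiding iff it is 312-avoiding. -/
theorem sn_avoiding132_iff_avoiding312 (n : ℕ) (w : List ℕ) (hw : IsSortingNetwork n w) :
    Avoiding132 n w ↔ Avoiding312 n w := by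
  constructor
  · intro h
    exact avoiding132_to_312 hw h
  · intro h
    have hrev : IsReducedWord n Fin.revPerm w.reverse := reverse_reduced hw
    have h132rev : Avoiding132 n w.reverse := by
      have hiff := avoiding132_iff_rev hrev
      rw [List.reverse_reverse] at hiff
      exact hiff.mpr h
    have h312rev : Avoiding312 n w.reverse := avoiding132_to_312 hrev h132rev
    exact (avoiding132_iff_rev hw).mpr h312rev
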